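/- Let η₁, …, η_N be independent Rademacher random variables (each ±1 with probability 1/2) and a₁, …, a_N real numbers with ∑ᵢ aᵢ² < 1. Then E[exp((1/2)(∑ᵢ aᵢηᵢ)²)] ≤ (1 − ∑ᵢ aᵢ²)^(−1/2). -/

import Mathlib

open MeasureTheory ProbabilityTheory Real
open scoped ENNReal

lemma integrable_exp_quad {b : ℝ} (hb : 0 < b) (c : ℝ) :
    Integrable (fun y : ℝ => Real.exp (-b * y ^ 2 + c * y)) := by
  have h : ∀ y : ℝ, -b * y ^ 2 + c * y = c ^ 2 / (4 * b) + -b * (y - c / (2 * b)) ^ 2 := by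
    intro y; field_simp; ring
  simp_rw [h, Real.exp_add]
  exact (((integrable_exp_neg_mul_sq hb).comp_sub_right (c / (2 * b)))).const_mul _

lemma integral_exp_quad {b : ℝ} (hb : 0 < b) (c : ℝ) :
    ∫ y : ℝ, Real.exp (-b * y ^ 2 + c * y) = Real.sqrt (π / b) * Real.exp (c ^ 2 / (4 * b)) := by
  have h : ∀ y : ℝ, -b * y ^ 2 + c * y = c ^ 2 / (4 * b) + -b * (y - c / (2 * b)) ^ 2 := by
    intro y; field_simp; ring
  simp_rw [h, Real.exp_add, integral_const_mul]
  rw [show (fun y : ℝ => Real.exp (-b * (y - c / (2 * b)) ^ 2)) = fun y : ℝ => (fun x => Real.exp (-b * x ^ 2)) (y - c / (2 * b)) from rfl]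
  rw [integral_sub_right_eq_self (fun x => Real.exp (-b * x ^ 2)) (c / (2 * b)), integral_gaussian]
  ring

lemma integral_rademacher (f : ℝ → ℝ) :
    ∫ x, f x ∂((1 / 2 : ℝ≥0∞) • Measure.dirac (1 : ℝ) + (1 / 2 : ℝ≥0∞) • Measure.dirac (-1 : ℝ))
      = (f 1 + f (-1)) / 2 := by
  have h1 : Integrable f (Measure.dirac (1 : ℝ)) :=
    (integrable_congr (MeasureTheory.ae_eq_dirac f)).2 (integrable_const _)
  have h2 : Integrable f (Measure.dirac (-1 : ℝ)) :=
    (integrable_congr (MeasureTheory.ae_eq_dirac f)).2 (integrable_const _)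
  rw [integral_add_measure (h1.smul_measure (by norm_num)) (h2.smul_measure (by norm_num)),
    integral_smul_measure, integral_smul_measure, integral_dirac, integral_dirac]
  simp [ENNReal.toReal_div]
  ring

lemma indep_prod_integral {Ω : Type*} [MeasurableSpace Ω] (μ : Measure Ω) [IsProbabilityMeasure μ]
    {N : ℕ} (η : Fin N → Ω → ℝ) (hmeas : ∀ i, Measurable (η i))
    (hindep : iIndepFun η μ) (g : Fin N → ℝ → ℝ)
    (hg : ∀ i, Measurable (g i)) (s : Finset (Fin N)) :
    ∫ ω, ∏ i ∈ s, g i (η i ω) ∂μ = ∏ i ∈ s, ∫ ω, g i (η i ω) ∂μ := by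
  classical
  have hind : iIndepFun (fun i => g i ∘ η i) μ :=
    hindep.comp g hg
  induction s using Finset.induction_on with
  | empty => simp
  | insert j s hj ih =>
    have hIF : IndepFun (∏ i ∈ s, (g i ∘ η i)) (g j ∘ η j) μ :=
      hind.indepFun_finset_prod_of_notMem (fun i => (hg i).comp (hmeas i)) hj
    have hm2 : AEStronglyMeasurable (∏ i ∈ s, g i ∘ η i) μ := by
      rw [show (∏ i ∈ s, g i ∘ η i) = fun a => ∏ i ∈ s, g i (η i a) from funext fun a => by simp]
      exact (Finset.measurable_prod s fun i _ => (hg i).comp (hmeas i)).aestronglyMeasurable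
    have key := hIF.symm.integral_mul_eq_mul_integral (((hg j).comp (hmeas j)).aestronglyMeasurable) hm2
    simp only [Pi.mul_apply, Finset.prod_apply, Function.comp_apply] at key
    simp only [Finset.prod_insert hj]
    rw [key]
    congr 1

theorem rademacher_exp_moment {Ω : Type*} [MeasurableSpace Ω] (μ : Measure Ω)
    [IsProbabilityMeasure μ] (N : ℕ) (η : Fin N → Ω → ℝ) (a : Fin N → ℝ)
    (hmeas : ∀ i, Measurable (η i))
    (hindep : iIndepFun η μ)
    (hlaw : ∀ i, μ.map (η i)
      = (1 / 2 : ℝ≥0∞) • Measure.dirac (1 : ℝ) + (1 / 2 : ℝ≥0∞) • Measure.dirac (-1 : ℝ))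
    (ha : ∑ i, a i ^ 2 < 1) :
    ∫ ω, Real.exp ((1 / 2) * (∑ i, a i * η i ω) ^ 2) ∂μ
      ≤ (1 - ∑ i, a i ^ 2) ^ (-(1 : ℝ) / 2) := by
  classical
  set t := ∑ i, a i ^ 2 with ht
  set C := ∑ i, |a i| with hC
  set S : Ω → ℝ := fun ω => ∑ i, a i * η i ω with hS
  have hSmeas : Measurable S := Finset.measurable_sum _ fun i _ => (hmeas i).const_mul (a i)
  -- a.e. bound on S
  have haei : ∀ i, ∀ᵐ ω ∂μ, η i ω ∈ ({1, -1} : Set ℝ) := by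
    intro i
    have hset : MeasurableSet (({1, -1} : Set ℝ)ᶜ) :=
      (MeasurableSet.insert (measurableSet_singleton _) 1).compl
    have : μ (η i ⁻¹' ({1, -1} : Set ℝ)ᶜ) = 0 := by
      rw [← Measure.map_apply (hmeas i) hset, hlaw i]
      simp [Measure.dirac_apply', hset]
    filter_upwards [measure_eq_zero_iff_ae_notMem.mp this] with ω hω
    exact not_not.mp hω
  have haeS : ∀ᵐ ω ∂μ, |S ω| ≤ C := by
    have := (ae_all_iff.2 haei)
    filter_upwards [this] with ω hω
    calc |S ω| ≤ ∑ i, |a i * η i ω| := Finset.abs_sum_le_sum_abs _ _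
      _ = ∑ i, |a i| := by
          refine Finset.sum_congr rfl fun i _ => ?_
          have h' := hω i
          simp only [Set.mem_insert_iff, Set.mem_singleton_iff] at h'
          rcases h' with h | h <;> simp [abs_mul, h, abs_neg]
  -- the kernel function
  set F : Ω → ℝ → ℝ := fun ω y => Real.exp (-(1/2) * y ^ 2 + S ω * y) with hF
  have hFmeas : Measurable (Function.uncurry F) := by
    apply Measurable.exp
    exact (((measurable_snd.pow_const 2).const_mul (-(1/2))).add
      ((hSmeas.comp measurable_fst).mul measurable_snd))
  -- pointwise identity
  have hpt : ∀ s : ℝ, Real.exp ((1/2) * s ^ 2)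
      = (Real.sqrt (2 * π))⁻¹ * ∫ y : ℝ, Real.exp (-(1/2) * y ^ 2 + s * y) := by
    intro s
    rw [show (-(1/2) : ℝ) = -(1/2 : ℝ) from rfl]
    rw [integral_exp_quad (by norm_num : (0:ℝ) < 1/2) s]
    rw [show π / (1/2 : ℝ) = 2 * π by ring, show s ^ 2 / (4 * (1/2 : ℝ)) = (1/2) * s ^ 2 by ring]
    rw [← mul_assoc, inv_mul_cancel₀ (by positivity : Real.sqrt (2 * π) ≠ 0), one_mul]
  -- integrability on the product space
  have hFint : Integrable (Function.uncurry F) (μ.prod volume) := by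
    rw [integrable_prod_iff hFmeas.aestronglyMeasurable]
    constructor
    · exact Filter.Eventually.of_forall fun ω => integrable_exp_quad (by norm_num) (S ω)
    · have hnorm : ∀ ω, (∫ y : ℝ, ‖F ω y‖) = Real.sqrt (2 * π) * Real.exp ((1/2) * (S ω) ^ 2) := by
        intro ω
        have : ∀ y : ℝ, ‖F ω y‖ = F ω y := fun y => norm_of_nonneg (Real.exp_nonneg _)
        simp_rw [this, hF]
        rw [integral_exp_quad (by norm_num : (0:ℝ) < 1/2) (S ω)]
        rw [show π / (1/2 : ℝ) = 2 * π by ring, show (S ω) ^ 2 / (4 * (1/2 : ℝ)) = (1/2) * (S ω) ^ 2 by ring]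
      apply Integrable.mono' (integrable_const (Real.sqrt (2 * π) * Real.exp ((1/2) * C ^ 2)))
      · exact (hFmeas.aestronglyMeasurable.norm.integral_prod_right')
      · filter_upwards [haeS] with ω hω
        simp only [Function.uncurry_apply_pair]
        rw [hnorm ω, norm_of_nonneg (by positivity)]
        have h1 : (S ω) ^ 2 ≤ C ^ 2 := sq_le_sq' (neg_le_of_abs_le hω) (le_of_abs_le hω)
        have := Real.exp_le_exp.2 (by linarith : (1/2) * (S ω) ^ 2 ≤ (1/2) * C ^ 2)
        nlinarith [Real.sqrt_nonneg (2 * π), Real.exp_pos ((1/2) * (S ω)^2)]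
  -- inner integral computation
  have hinner : ∀ y : ℝ, ∫ ω, F ω y ∂μ
      = Real.exp (-(1/2) * y ^ 2) * ∏ i, Real.cosh (a i * y) := by
    intro y
    have h1 : ∀ ω, F ω y = Real.exp (-(1/2) * y ^ 2) * ∏ i, Real.exp (a i * y * η i ω) := by
      intro ω
      rw [hF]
      simp only
      rw [Real.exp_add, ← Real.exp_sum]
      congr 2
      rw [hS]; simp only
      rw [Finset.sum_mul]
      exact Finset.sum_congr rfl fun i _ => by ring
    simp_rw [h1]
    rw [integral_const_mul]
    congr 1
    rw [indep_prod_integral μ η hmeas hindep (fun i x => Real.exp (a i * y * x))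
      (fun i => (measurable_id.const_mul _).exp) Finset.univ]
    refine Finset.prod_congr rfl fun i _ => ?_
    have hgm : Measurable fun x : ℝ => Real.exp (a i * y * x) := by fun_prop
    rw [← integral_map (hmeas i).aemeasurable hgm.aestronglyMeasurable, hlaw i,
      integral_rademacher]
    simp only [id_eq, mul_one, mul_neg_one]
    rw [Real.cosh_eq]
  -- final bound
  have hu : (0:ℝ) < 1 - t := by linarith
  have hb : (0:ℝ) < (1 - t)/2 := by linarith
  have h2pi : (0:ℝ) < 2 * π := by positivity
  have hHint : Integrable (fun y : ℝ => Real.exp (-((1-t)/2) * y ^ 2)) :=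
    integrable_exp_neg_mul_sq hb
  have hGle : ∀ y : ℝ, Real.exp (-(1/2) * y ^ 2) * ∏ i, Real.cosh (a i * y)
      ≤ Real.exp (-((1-t)/2) * y ^ 2) := by
    intro y
    have h1 : ∏ i, Real.cosh (a i * y) ≤ ∏ i, Real.exp ((a i * y) ^ 2 / 2) :=
      Finset.prod_le_prod (fun i _ => (Real.cosh_pos _).le)
        (fun i _ => Real.cosh_le_exp_half_sq _)
    have h2 : ∏ i, Real.exp ((a i * y) ^ 2 / 2) = Real.exp (∑ i, (a i * y) ^ 2 / 2) :=
      (Real.exp_sum _ _).symm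
    have h3 : ∑ i, (a i * y) ^ 2 / 2 = t * (y ^ 2 / 2) := by
      rw [ht, Finset.sum_mul]
      exact Finset.sum_congr rfl fun i _ => by ring
    calc Real.exp (-(1/2) * y ^ 2) * ∏ i, Real.cosh (a i * y)
        ≤ Real.exp (-(1/2) * y ^ 2) * Real.exp (t * (y ^ 2 / 2)) := by
          apply mul_le_mul_of_nonneg_left _ (Real.exp_nonneg _)
          rw [h2, h3] at h1; exact h1
      _ = Real.exp (-((1-t)/2) * y ^ 2) := by rw [← Real.exp_add]; ring_nf
  have hGnn : ∀ y : ℝ, 0 ≤ Real.exp (-(1/2) * y ^ 2) * ∏ i, Real.cosh (a i * y) := by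
    intro y
    exact mul_nonneg (Real.exp_nonneg _)
      (Finset.prod_nonneg fun i _ => (Real.cosh_pos _).le)
  have hmono : (∫ y : ℝ, Real.exp (-(1/2) * y ^ 2) * ∏ i, Real.cosh (a i * y))
      ≤ ∫ y : ℝ, Real.exp (-((1-t)/2) * y ^ 2) :=
    integral_mono_of_nonneg (Filter.Eventually.of_forall hGnn) hHint
      (Filter.Eventually.of_forall hGle)
  calc ∫ ω, Real.exp ((1 / 2) * (∑ i, a i * η i ω) ^ 2) ∂μ
      = ∫ ω, (Real.sqrt (2 * π))⁻¹ * (∫ y : ℝ, F ω y) ∂μ := by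
        refine integral_congr_ae (Filter.Eventually.of_forall fun ω => ?_)
        exact hpt (S ω)
    _ = (Real.sqrt (2 * π))⁻¹ * ∫ ω, (∫ y : ℝ, F ω y) ∂μ := integral_const_mul _ _
    _ = (Real.sqrt (2 * π))⁻¹ * ∫ y : ℝ, (∫ ω, F ω y ∂μ) := by
        rw [integral_integral_swap hFint]
    _ = (Real.sqrt (2 * π))⁻¹
        * ∫ y : ℝ, Real.exp (-(1/2) * y ^ 2) * ∏ i, Real.cosh (a i * y) := by
        congr 1
        exact integral_congr_ae (Filter.Eventually.of_forall fun y => hinner y)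
    _ ≤ (Real.sqrt (2 * π))⁻¹ * ∫ y : ℝ, Real.exp (-((1-t)/2) * y ^ 2) :=
        mul_le_mul_of_nonneg_left hmono (inv_nonneg.2 (Real.sqrt_nonneg _))
    _ = (Real.sqrt (2 * π))⁻¹ * Real.sqrt (π / ((1-t)/2)) := by
        rw [integral_gaussian]
    _ = (1 - t) ^ (-(1:ℝ)/2) := by
        rw [show π / ((1-t)/2) = (2*π) / (1-t) by rw [div_div_eq_mul_div]; ring_nf]
        rw [Real.sqrt_div h2pi.le]
        rw [show -(1:ℝ)/2 = -(1/2:ℝ) by norm_num,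
          Real.rpow_neg hu.le, ← Real.sqrt_eq_rpow]
        rw [div_eq_mul_inv, ← mul_assoc,
          inv_mul_cancel₀ (by positivity : Real.sqrt (2*π) ≠ 0), one_mul]
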